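/- arXiv:2605.13271 — 4 statements merged into one kernel-verified Lean document; each statement's English description precedes it below -/
import Mathlib

section
/- Fix η ∈ (0,1), γ > 0, r > 0, set s₀ = (1−η)/(2η), a = √(2π), c_q = a r/2, c_p = a/(2r), σ_q(θ) = √(s₀ + γ sin²θ), σ_p(θ) = √(s₀ + γ cos²θ), u_q(θ) = c_q/σ_q(θ), u_p(θ) = c_p/σ_p(θ), and define the balance function B(θ) = r²·φ(u_q(θ))/σ_q(θ)³ − φ(u_p(θ))/σ_p(θ)³. Suppose the regime condition holds: σ_q(θ) < c_q/√3 and σ_p(θ) < c_p/√3 for every θ ∈ [0, π/2] (equivalently u_q(θ) > √3 and u_p(θ) > √3 throughout). Then B is strictly monotone increasing on [0, π/2]. -/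
/-- The standard normal density `φ(x) = e^{-x²/2}/√(2π)`. -/
noncomputable def gaussPdf (x : ℝ) : ℝ := Real.exp (-x ^ 2 / 2) / Real.sqrt (2 * Real.pi)

/-- The Gaussian tail `Q(x) = ∫_x^∞ φ(t) dt`. -/
noncomputable def gaussTail (x : ℝ) : ℝ := ∫ t in Set.Ioi x, gaussPdf t

/-- Isotropic loss-induced spread `s₀ = (1-η)/(2η)`. -/
noncomputable def s0 (η : ℝ) : ℝ := (1 - η) / (2 * η)

/-- The GKP lattice constant `a = √(2π)`. -/
noncomputable def aGKP : ℝ := Real.sqrt (2 * Real.pi)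

/-- Effective spread `σ_q(θ) = √(s₀ + γ sin²θ)`. -/
noncomputable def sigq (η γ θ : ℝ) : ℝ := Real.sqrt (s0 η + γ * Real.sin θ ^ 2)

/-- Effective spread `σ_p(θ) = √(s₀ + γ cos²θ)`. -/
noncomputable def sigp (η γ θ : ℝ) : ℝ := Real.sqrt (s0 η + γ * Real.cos θ ^ 2)

/-- Normalized correction radius `u_q(θ) = (a r / 2) / σ_q(θ)`. -/
noncomputable def uq (η γ r θ : ℝ) : ℝ := aGKP * r / 2 / sigq η γ θ

/-- Normalized correction radius `u_p(θ) = (a / (2r)) / σ_p(θ)`. -/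
noncomputable def up (η γ r θ : ℝ) : ℝ := aGKP / (2 * r) / sigp η γ θ

/-- The balance function `B(θ) = r²·φ(u_q)/σ_q³ − φ(u_p)/σ_p³`. -/
noncomputable def balance (η γ r θ : ℝ) : ℝ :=
  r ^ 2 * gaussPdf (uq η γ r θ) / sigq η γ θ ^ 3 - gaussPdf (up η γ r θ) / sigp η γ θ ^ 3

/-- Quadrature error probability `P_q(θ) = 2 Q(u_q(θ))`. -/
noncomputable def Pq (η γ r θ : ℝ) : ℝ := 2 * gaussTail (uq η γ r θ)

/-- Quadrature error probability `P_p(θ) = 2 Q(u_p(θ))`. -/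
noncomputable def Pp (η γ r θ : ℝ) : ℝ := 2 * gaussTail (up η γ r θ)

/-- Logical error rate `P_err(θ) = 1 − (1 − P_q(θ))(1 − P_p(θ))`. -/
noncomputable def Perr (η γ r θ : ℝ) : ℝ := 1 - (1 - Pq η γ r θ) * (1 - Pp η γ r θ)

/-- Key monotonicity: `σ ↦ φ(c/σ)/σ³` is strictly increasing on `{σ : 0 < σ, √3 < c/σ}`. -/
lemma gauss_key (c σ₁ σ₂ : ℝ) (h1 : 0 < σ₁) (h12 : σ₁ < σ₂)
    (hreg : Real.sqrt 3 < c / σ₂) :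
    gaussPdf (c / σ₁) / σ₁ ^ 3 < gaussPdf (c / σ₂) / σ₂ ^ 3 := by
  have h2 : 0 < σ₂ := h1.trans h12
  have hs3 : (0:ℝ) ≤ Real.sqrt 3 := Real.sqrt_nonneg 3
  have hdiv : 0 < c / σ₂ := hs3.trans_lt hreg
  have hc : 0 < c := by
    have := mul_pos hdiv h2
    rwa [div_mul_cancel₀ _ h2.ne'] at this
  -- 3 < c²/σ₂²
  have hsq : (3:ℝ) < (c / σ₂) ^ 2 := by
    have := mul_self_lt_mul_self hs3 hreg
    rw [Real.mul_self_sqrt (by norm_num)] at this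
    nlinarith
  have h3 : 3 * σ₂ ^ 2 < c ^ 2 := by
    have h2' : (0:ℝ) < σ₂ ^ 2 := by positivity
    rw [div_pow] at hsq
    calc 3 * σ₂ ^ 2 < (c ^ 2 / σ₂ ^ 2) * σ₂ ^ 2 := by nlinarith
      _ = c ^ 2 := by field_simp
  set A : ℝ := (c / σ₁) ^ 2 / 2 with hA
  set B : ℝ := (c / σ₂) ^ 2 / 2 with hB
  set y : ℝ := σ₂ ^ 2 / σ₁ ^ 2 with hy
  have hy1 : 1 < y := by
    rw [hy, lt_div_iff₀ (by positivity)]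
    nlinarith
  have h2AB : 3 * (y - 1) < 2 * (A - B) := by
    have hAB : 2 * (A - B) = (c ^ 2 / σ₂ ^ 2) * (y - 1) := by
      rw [hA, hB, hy]
      field_simp
    rw [hAB]
    have : 3 < c ^ 2 / σ₂ ^ 2 := by
      rw [lt_div_iff₀ (by positivity)]; linarith
    nlinarith
  have hexp : y ≤ Real.exp (y - 1) := by
    have := Real.add_one_le_exp (y - 1)
    linarith
  have hy0 : (0:ℝ) ≤ y := by positivity
  have hcube : y ^ 3 < Real.exp (2 * (A - B)) := by
    calc y ^ 3 ≤ Real.exp (y - 1) ^ 3 := pow_le_pow_left₀ hy0 hexp 3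
      _ = Real.exp (3 * (y - 1)) := by
          rw [← Real.exp_nat_mul]; norm_num
      _ < Real.exp (2 * (A - B)) := Real.exp_lt_exp.mpr h2AB
  have hE : σ₂ ^ 3 / σ₁ ^ 3 < Real.exp (A - B) := by
    have hsq' : (σ₂ ^ 3 / σ₁ ^ 3) ^ 2 < Real.exp (A - B) ^ 2 := by
      have h1' : (σ₂ ^ 3 / σ₁ ^ 3) ^ 2 = y ^ 3 := by
        rw [hy]; field_simp
      have h2' : Real.exp (A - B) ^ 2 = Real.exp (2 * (A - B)) := by
        rw [← Real.exp_nat_mul]; norm_num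
      rw [h1', h2']
      exact hcube
    exact lt_of_pow_lt_pow_left₀ 2 (Real.exp_pos _).le hsq'
  have hmul : Real.exp (-A) * σ₂ ^ 3 < Real.exp (-B) * σ₁ ^ 3 := by
    have h := (div_lt_iff₀ (by positivity : (0:ℝ) < σ₁ ^ 3)).mp hE
    have h' := mul_lt_mul_of_pos_left h (Real.exp_pos (-A))
    calc Real.exp (-A) * σ₂ ^ 3 < Real.exp (-A) * (Real.exp (A - B) * σ₁ ^ 3) := h'
      _ = Real.exp (-B) * σ₁ ^ 3 := by
          rw [← mul_assoc, ← Real.exp_add]; ring_nf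
  -- conclude
  have hpi : (0:ℝ) < Real.sqrt (2 * Real.pi) :=
    Real.sqrt_pos.mpr (by positivity)
  unfold gaussPdf
  rw [div_div, div_div, div_lt_div_iff₀ (by positivity) (by positivity)]
  have e1 : -(c / σ₁) ^ 2 / 2 = -A := by rw [hA]; ring
  have e2 : -(c / σ₂) ^ 2 / 2 = -B := by rw [hB]; ring
  rw [e1, e2]
  nlinarith [mul_lt_mul_of_pos_left hmul hpi]

/-- under the regime condition `u_q(θ) > √3` and `u_p(θ) > √3`
(equivalently `σ_q < c_q/√3` and `σ_p < c_p/√3`) throughout `[0, π/2]`, the balance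
function `B` is strictly monotone increasing on `[0, π/2]`. -/
theorem balance_strictMonoOn (η γ r : ℝ) (hη : η ∈ Set.Ioo (0 : ℝ) 1)
    (hγ : 0 < γ) (hr : 0 < r)
    (hreg : ∀ θ ∈ Set.Icc (0 : ℝ) (Real.pi / 2),
      Real.sqrt 3 < uq η γ r θ ∧ Real.sqrt 3 < up η γ r θ) :
    StrictMonoOn (balance η γ r) (Set.Icc 0 (Real.pi / 2)) := by
  intro θ₁ h₁ θ₂ h₂ h₁₂
  have hpi : (0:ℝ) < Real.pi := Real.pi_pos
  have hs0 : 0 < s0 η := div_pos (by linarith [hη.2]) (by linarith [hη.1])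
  have hmem1 : θ₁ ∈ Set.Icc (-(Real.pi / 2)) (Real.pi / 2) :=
    ⟨by linarith [h₁.1], h₁.2⟩
  have hmem2 : θ₂ ∈ Set.Icc (-(Real.pi / 2)) (Real.pi / 2) :=
    ⟨by linarith [h₂.1], h₂.2⟩
  have hsin : Real.sin θ₁ < Real.sin θ₂ := Real.strictMonoOn_sin hmem1 hmem2 h₁₂
  have hsin1 : 0 ≤ Real.sin θ₁ :=
    Real.sin_nonneg_of_nonneg_of_le_pi h₁.1 (by linarith [h₁.2])
  have hcos : Real.cos θ₂ < Real.cos θ₁ :=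
    Real.strictAntiOn_cos ⟨h₁.1, by linarith [h₁.2]⟩ ⟨h₂.1, by linarith [h₂.2]⟩ h₁₂
  have hcos2 : 0 ≤ Real.cos θ₂ := Real.cos_nonneg_of_mem_Icc hmem2
  -- σ_q strictly increases
  have hq12 : sigq η γ θ₁ < sigq η γ θ₂ := by
    unfold sigq
    apply Real.sqrt_lt_sqrt (by positivity)
    nlinarith [mul_lt_mul_of_pos_left
      (show Real.sin θ₁ ^ 2 < Real.sin θ₂ ^ 2 by nlinarith) hγ]
  have hq1 : 0 < sigq η γ θ₁ := Real.sqrt_pos.mpr (by positivity)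
  -- σ_p strictly decreases
  have hp21 : sigp η γ θ₂ < sigp η γ θ₁ := by
    unfold sigp
    apply Real.sqrt_lt_sqrt (by positivity)
    nlinarith [mul_lt_mul_of_pos_left
      (show Real.cos θ₂ ^ 2 < Real.cos θ₁ ^ 2 by nlinarith) hγ]
  have hp2 : 0 < sigp η γ θ₂ := Real.sqrt_pos.mpr (by positivity)
  have keyq : gaussPdf (uq η γ r θ₁) / sigq η γ θ₁ ^ 3
      < gaussPdf (uq η γ r θ₂) / sigq η γ θ₂ ^ 3 :=
    gauss_key (aGKP * r / 2) _ _ hq1 hq12 ((hreg θ₂ h₂).1)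
  have keyp : gaussPdf (up η γ r θ₂) / sigp η γ θ₂ ^ 3
      < gaussPdf (up η γ r θ₁) / sigp η γ θ₁ ^ 3 :=
    gauss_key (aGKP / (2 * r)) _ _ hp2 hp21 ((hreg θ₁ h₁).2)
  unfold balance
  rw [mul_div_assoc, mul_div_assoc]
  have := mul_lt_mul_of_pos_left keyq (by positivity : (0:ℝ) < r ^ 2)
  linarith
end

section
/- Fix η ∈ (0,1), γ > 0, r > 0 with the associated balance function B(θ) = r²·φ(u_q(θ))/σ_q(θ)³ − φ(u_p(θ))/σ_p(θ)³. Suppose the regime condition u_q(θ) > √3 and u_p(θ) > √3 holds for every θ ∈ [0, π/2], and suppose B(0) < 0 and B(π/2) > 0. Then there exists a unique θ* ∈ (0, π/2) with B(θ*) = 0. -/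
noncomputable def Lfun (c s : ℝ) : ℝ := -c ^ 2 / (2 * s) - 3 / 2 * Real.log s

lemma Lfun_hasDerivAt (c : ℝ) {s : ℝ} (hs : 0 < s) :
    HasDerivAt (Lfun c) ((c ^ 2 - 3 * s) / (2 * s ^ 2)) s := by
  have h1 : HasDerivAt (fun x : ℝ => -c ^ 2 / (2 * x)) (c ^ 2 / (2 * s ^ 2)) s := by
    have h := (hasDerivAt_inv hs.ne').const_mul (-c ^ 2 / 2)
    have he : (fun y : ℝ => -c ^ 2 / 2 * y⁻¹) = fun x : ℝ => -c ^ 2 / (2 * x) := by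
      funext x; ring
    rw [he] at h
    refine h.congr_deriv ?_
    field_simp
  have h2 : HasDerivAt (fun x : ℝ => 3 / 2 * Real.log x) (3 / 2 * s⁻¹) s :=
    (Real.hasDerivAt_log hs.ne').const_mul (3 / 2)
  have := h1.sub h2
  refine this.congr_deriv ?_
  field_simp

lemma Lfun_strictMonoOn (c A B : ℝ) (hA : 0 < A) (hB : 3 * B < c ^ 2) :
    StrictMonoOn (Lfun c) (Set.Icc A B) := by
  have hcont : ContinuousOn (Lfun c) (Set.Icc A B) := fun x hx =>
    ((Lfun_hasDerivAt c (lt_of_lt_of_le hA hx.1)).continuousAt).continuousWithinAt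
  apply strictMonoOn_of_deriv_pos (convex_Icc A B) hcont
  intro x hx
  rw [interior_Icc] at hx
  have hx0 : 0 < x := lt_trans hA hx.1
  rw [(Lfun_hasDerivAt c hx0).deriv]
  apply div_pos _ (by positivity)
  have : 3 * x < 3 * B := by linarith [hx.2]
  linarith

lemma term_eq (c : ℝ) {s : ℝ} (hs : 0 < s) :
    gaussPdf (c / Real.sqrt s) / Real.sqrt s ^ 3
      = Real.exp (Lfun c s) / Real.sqrt (2 * Real.pi) := by
  have hss : Real.sqrt s > 0 := Real.sqrt_pos.2 hs
  have h1 : (c / Real.sqrt s) ^ 2 = c ^ 2 / s := by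
    rw [div_pow, Real.sq_sqrt hs.le]
  have h2 : Real.sqrt s ^ 3 = Real.exp (3 / 2 * Real.log s) := by
    have : Real.sqrt s = Real.exp (Real.log s / 2) := by
      rw [← Real.exp_log hss, Real.log_sqrt hs.le]
    rw [this, ← Real.exp_nat_mul]
    ring_nf
  rw [gaussPdf, h1, h2, div_div, mul_comm, ← div_div, ← Real.exp_sub, Lfun]
  congr 2
  ring

/-- under the regime condition, if `B(0) < 0 < B(π/2)` then there exists a
unique `θ* ∈ (0, π/2)` with `B(θ*) = 0`. -/
theorem balance_unique_root (η γ r : ℝ) (hη : η ∈ Set.Ioo (0 : ℝ) 1)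
    (hγ : 0 < γ) (hr : 0 < r)
    (hreg : ∀ θ ∈ Set.Icc (0 : ℝ) (Real.pi / 2),
      Real.sqrt 3 < uq η γ r θ ∧ Real.sqrt 3 < up η γ r θ)
    (hB0 : balance η γ r 0 < 0) (hB1 : 0 < balance η γ r (Real.pi / 2)) :
    ∃! θ : ℝ, θ ∈ Set.Ioo 0 (Real.pi / 2) ∧ balance η γ r θ = 0 := by
  have hπ := Real.pi_pos
  have hs : 0 < s0 η := div_pos (by linarith [hη.2]) (by linarith [hη.1])
  set cq := aGKP * r / 2 with hcqdef
  set cp := aGKP / (2 * r) with hcpdef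
  have hSq : ∀ θ : ℝ, 0 < s0 η + γ * Real.sin θ ^ 2 := fun θ =>
    lt_of_lt_of_le hs (le_add_of_nonneg_right (by positivity))
  have hSp : ∀ θ : ℝ, 0 < s0 η + γ * Real.cos θ ^ 2 := fun θ =>
    lt_of_lt_of_le hs (le_add_of_nonneg_right (by positivity))
  -- rewrite balance via Lfun
  have hbal : ∀ θ : ℝ, balance η γ r θ =
      (r ^ 2 * Real.exp (Lfun cq (s0 η + γ * Real.sin θ ^ 2))
        - Real.exp (Lfun cp (s0 η + γ * Real.cos θ ^ 2))) / Real.sqrt (2 * Real.pi) := by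
    intro θ
    have e1 := term_eq cq (hSq θ)
    have e2 := term_eq cp (hSp θ)
    rw [balance, uq, up, sigq, sigp, mul_div_assoc, ← hcqdef, ← hcpdef, e1, e2]
    ring
  -- regime bounds at the extreme points
  have hmemπ : Real.pi / 2 ∈ Set.Icc (0 : ℝ) (Real.pi / 2) := ⟨by positivity, le_refl _⟩
  have hmem0 : (0 : ℝ) ∈ Set.Icc (0 : ℝ) (Real.pi / 2) := ⟨le_refl _, by positivity⟩
  have key : ∀ c : ℝ, Real.sqrt 3 < c / Real.sqrt (s0 η + γ) →
      3 * (s0 η + γ) < c ^ 2 := by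
    intro c hc
    have hd : 0 < Real.sqrt (s0 η + γ) := Real.sqrt_pos.2 (by linarith)
    have h1 : Real.sqrt 3 * Real.sqrt (s0 η + γ) < c := (lt_div_iff₀ hd).1 hc
    have h2 : (Real.sqrt 3 * Real.sqrt (s0 η + γ)) ^ 2 < c ^ 2 :=
      pow_lt_pow_left₀ h1 (by positivity) (by norm_num)
    rwa [mul_pow, Real.sq_sqrt (by norm_num : (3:ℝ) ≥ 0 ), Real.sq_sqrt (by linarith)] at h2
  have hcq : 3 * (s0 η + γ) < cq ^ 2 := by
    have := (hreg _ hmemπ).1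
    rw [uq, sigq, Real.sin_pi_div_two] at this
    exact key cq (by simpa using this)
  have hcp : 3 * (s0 η + γ) < cp ^ 2 := by
    have := (hreg _ hmem0).2
    rw [up, sigp, Real.cos_zero] at this
    exact key cp (by simpa using this)
  have hLq := Lfun_strictMonoOn cq (s0 η) (s0 η + γ) hs hcq
  have hLp := Lfun_strictMonoOn cp (s0 η) (s0 η + γ) hs hcp
  have hmemS : ∀ x : ℝ, 0 ≤ x → x ≤ 1 → s0 η + γ * x ∈ Set.Icc (s0 η) (s0 η + γ) :=
    fun x h0 h1 => ⟨le_add_of_nonneg_right (by positivity), by nlinarith⟩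
  -- strict monotonicity of balance
  have hmono : StrictMonoOn (balance η γ r) (Set.Icc 0 (Real.pi / 2)) := by
    intro θ₁ h₁ θ₂ h₂ hlt
    rw [hbal θ₁, hbal θ₂]
    have h2π : 0 < Real.sqrt (2 * Real.pi) := Real.sqrt_pos.2 (by positivity)
    apply div_lt_div_of_pos_right ?_ h2π
    have hsin : Real.sin θ₁ ^ 2 < Real.sin θ₂ ^ 2 := by
      have hm1 : θ₁ ∈ Set.Icc (-(Real.pi / 2)) (Real.pi / 2) := ⟨by linarith [h₁.1], h₁.2⟩
      have hm2 : θ₂ ∈ Set.Icc (-(Real.pi / 2)) (Real.pi / 2) := ⟨by linarith [h₂.1], h₂.2⟩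
      have hlt' := Real.strictMonoOn_sin hm1 hm2 hlt
      have h0 : 0 ≤ Real.sin θ₁ := Real.sin_nonneg_of_nonneg_of_le_pi h₁.1 (by linarith [h₁.2])
      exact pow_lt_pow_left₀ hlt' h0 (by norm_num)
    have hcos : Real.cos θ₂ ^ 2 < Real.cos θ₁ ^ 2 := by
      rw [Real.cos_sq', Real.cos_sq']
      linarith
    have hm1 := hmemS _ (sq_nonneg (Real.sin θ₁)) (Real.sin_sq_le_one θ₁)
    have hm2 := hmemS _ (sq_nonneg (Real.sin θ₂)) (Real.sin_sq_le_one θ₂)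
    have hm3 := hmemS _ (sq_nonneg (Real.cos θ₁)) (Real.cos_sq_le_one θ₁)
    have hm4 := hmemS _ (sq_nonneg (Real.cos θ₂)) (Real.cos_sq_le_one θ₂)
    have hA : Real.exp (Lfun cq (s0 η + γ * Real.sin θ₁ ^ 2))
        < Real.exp (Lfun cq (s0 η + γ * Real.sin θ₂ ^ 2)) :=
      Real.exp_lt_exp.2 (hLq hm1 hm2 (by nlinarith))
    have hB : Real.exp (Lfun cp (s0 η + γ * Real.cos θ₂ ^ 2))
        < Real.exp (Lfun cp (s0 η + γ * Real.cos θ₁ ^ 2)) :=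
      Real.exp_lt_exp.2 (hLp hm4 hm3 (by nlinarith))
    have h1 := mul_lt_mul_of_pos_left hA (by positivity : (0:ℝ) < r ^ 2)
    linarith
  -- continuity of balance
  have hσq_pos : ∀ θ : ℝ, 0 < sigq η γ θ := fun θ => Real.sqrt_pos.2 (hSq θ)
  have hσp_pos : ∀ θ : ℝ, 0 < sigp η γ θ := fun θ => Real.sqrt_pos.2 (hSp θ)
  have hgc : Continuous gaussPdf := by unfold gaussPdf; fun_prop
  have hσqc : Continuous (sigq η γ) := by unfold sigq; fun_prop
  have hσpc : Continuous (sigp η γ) := by unfold sigp; fun_prop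
  have huqc : Continuous (uq η γ r) :=
    Continuous.div continuous_const hσqc fun θ => (hσq_pos θ).ne'
  have hupc : Continuous (up η γ r) :=
    Continuous.div continuous_const hσpc fun θ => (hσp_pos θ).ne'
  have hcont : Continuous (balance η γ r) := by
    unfold balance
    exact ((continuous_const.mul (hgc.comp huqc)).div (hσqc.pow 3)
        fun θ => pow_ne_zero 3 (hσq_pos θ).ne').sub
      ((hgc.comp hupc).div (hσpc.pow 3) fun θ => pow_ne_zero 3 (hσp_pos θ).ne')
  -- existence via IVT
  have hsub := intermediate_value_Ioo (by positivity : (0:ℝ) ≤ Real.pi / 2)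
    hcont.continuousOn
  obtain ⟨θ, hθmem, hθeq⟩ := hsub ⟨hB0, hB1⟩
  refine ⟨θ, ⟨hθmem, hθeq⟩, ?_⟩
  rintro y ⟨hymem, hyeq⟩
  exact hmono.injOn (Set.Ioo_subset_Icc_self hymem) (Set.Ioo_subset_Icc_self hθmem)
    (hyeq.trans hθeq.symm)
end

section
/- Fix η ∈ (0,1), γ > 0, r > 0, and define the quadrature error probabilities P_q(θ) = 2Q(u_q(θ)) and P_p(θ) = 2Q(u_p(θ)). Then the function P̃(θ) = P_q(θ) + P_p(θ) is differentiable on ℝ and its derivative satisfies the identity P̃′(θ) = γ · sin θ · cos θ · (a/r) · B(θ) for every θ, where B is the balance function and a = √(2π). In particular, the interior stationary points of P̃ on (0, π/2) are exactly the zeros of B on (0, π/2). -/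
lemma integrable_gaussPdf : MeasureTheory.Integrable gaussPdf := by
  have h : gaussPdf = fun x => (Real.sqrt (2 * Real.pi))⁻¹ * Real.exp (-(1/2 : ℝ) * x ^ 2) := by
    funext x
    unfold gaussPdf
    rw [div_eq_inv_mul]
    ring_nf
  rw [h]
  exact (integrable_exp_neg_mul_sq (by norm_num)).const_mul _

lemma continuous_gaussPdf : Continuous gaussPdf := by
  unfold gaussPdf
  fun_prop

lemma gaussTail_eq (x : ℝ) :
    gaussTail x = gaussTail 0 - ∫ t in (0:ℝ)..x, gaussPdf t := by
  have h0 : MeasureTheory.IntegrableOn gaussPdf (Set.Iic (0:ℝ)) :=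
    integrable_gaussPdf.integrableOn
  have hx : MeasureTheory.IntegrableOn gaussPdf (Set.Iic x) :=
    integrable_gaussPdf.integrableOn
  have h0' : MeasureTheory.IntegrableOn gaussPdf (Set.Ioi (0:ℝ)) :=
    integrable_gaussPdf.integrableOn
  have hx' : MeasureTheory.IntegrableOn gaussPdf (Set.Ioi x) :=
    integrable_gaussPdf.integrableOn
  have e1 := intervalIntegral.integral_Iic_add_Ioi (μ := MeasureTheory.volume) h0 h0'
  have e2 := intervalIntegral.integral_Iic_add_Ioi (μ := MeasureTheory.volume) hx hx'
  have e3 := intervalIntegral.integral_Iic_sub_Iic (μ := MeasureTheory.volume) h0 hx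
  unfold gaussTail
  linarith [e1, e2, e3]

lemma hasDerivAt_gaussTail (x : ℝ) : HasDerivAt gaussTail (-gaussPdf x) x := by
  have h : HasDerivAt (fun u => ∫ t in (0:ℝ)..u, gaussPdf t) (gaussPdf x) x :=
    intervalIntegral.integral_hasDerivAt_right
      integrable_gaussPdf.intervalIntegrable
      (continuous_gaussPdf.stronglyMeasurableAtFilter _ _)
      continuous_gaussPdf.continuousAt
  have h2 : HasDerivAt (fun u => gaussTail 0 - ∫ t in (0:ℝ)..u, gaussPdf t)
      (-gaussPdf x) x := h.const_sub _
  exact h2.congr_deriv rfl |>.congr_of_eventuallyEq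
    (Filter.Eventually.of_forall fun u => (gaussTail_eq u))

/-- `P̃(θ) = P_q(θ) + P_p(θ)` is differentiable on ℝ with
`P̃′(θ) = γ sin θ cos θ (a/r) B(θ)`; consequently the interior stationary points of `P̃`
on `(0, π/2)` are exactly the zeros of `B` there. -/
theorem total_error_derivative (η γ r : ℝ) (hη : η ∈ Set.Ioo (0 : ℝ) 1)
    (hγ : 0 < γ) (hr : 0 < r) :
    (∀ θ : ℝ, HasDerivAt (fun t => Pq η γ r t + Pp η γ r t)
      (γ * Real.sin θ * Real.cos θ * (aGKP / r) * balance η γ r θ) θ) ∧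
    (∀ θ ∈ Set.Ioo (0 : ℝ) (Real.pi / 2),
      deriv (fun t => Pq η γ r t + Pp η γ r t) θ = 0 ↔ balance η γ r θ = 0) := by
  have hs0 : 0 < s0 η := by
    have h1 : 0 < 1 - η := by linarith [hη.2]
    have h2 : 0 < 2 * η := by linarith [hη.1]
    exact div_pos h1 h2
  have key : ∀ θ : ℝ, HasDerivAt (fun t => Pq η γ r t + Pp η γ r t)
      (γ * Real.sin θ * Real.cos θ * (aGKP / r) * balance η γ r θ) θ := by
    intro θ
    -- positivity of inner arguments
    have hsq : 0 < s0 η + γ * Real.sin θ ^ 2 := by positivity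
    have hsp : 0 < s0 η + γ * Real.cos θ ^ 2 := by positivity
    have hσq : 0 < sigq η γ θ := Real.sqrt_pos.mpr hsq
    have hσp : 0 < sigp η γ θ := Real.sqrt_pos.mpr hsp
    -- derivative of inner functions
    have hq1 : HasDerivAt (fun t => s0 η + γ * Real.sin t ^ 2)
        (γ * (2 * Real.sin θ * Real.cos θ)) θ := by
      have := ((Real.hasDerivAt_sin θ).pow 2).const_mul γ
      simpa [mul_comm, mul_assoc, mul_left_comm] using this.const_add (s0 η)
    have hp1 : HasDerivAt (fun t => s0 η + γ * Real.cos t ^ 2)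
        (γ * (2 * Real.cos θ * (-Real.sin θ))) θ := by
      have := ((Real.hasDerivAt_cos θ).pow 2).const_mul γ
      simpa [mul_comm, mul_assoc, mul_left_comm] using this.const_add (s0 η)
    -- derivative of sigq, sigp
    have hq2 : HasDerivAt (fun t => sigq η γ t)
        (γ * (2 * Real.sin θ * Real.cos θ) / (2 * sigq η γ θ)) θ := by
      have := (Real.hasDerivAt_sqrt hsq.ne').comp θ hq1
      simpa [sigq, div_eq_inv_mul, mul_comm, Function.comp_def] using this
    have hp2 : HasDerivAt (fun t => sigp η γ t)
        (γ * (2 * Real.cos θ * (-Real.sin θ)) / (2 * sigp η γ θ)) θ := by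
      have := (Real.hasDerivAt_sqrt hsp.ne').comp θ hp1
      simpa [sigp, div_eq_inv_mul, mul_comm, Function.comp_def] using this
    -- derivative of uq, up
    have hq3 : HasDerivAt (fun t => uq η γ r t)
        ((0 * sigq η γ θ - aGKP * r / 2 *
          (γ * (2 * Real.sin θ * Real.cos θ) / (2 * sigq η γ θ))) / sigq η γ θ ^ 2) θ :=
      (hasDerivAt_const θ (aGKP * r / 2)).div hq2 hσq.ne'
    have hp3 : HasDerivAt (fun t => up η γ r t)
        ((0 * sigp η γ θ - aGKP / (2 * r) *
          (γ * (2 * Real.cos θ * (-Real.sin θ)) / (2 * sigp η γ θ))) / sigp η γ θ ^ 2) θ :=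
      (hasDerivAt_const θ (aGKP / (2 * r))).div hp2 hσp.ne'
    -- derivative of Pq, Pp
    have hq4 : HasDerivAt (fun t => Pq η γ r t)
        (2 * (-gaussPdf (uq η γ r θ) *
          ((0 * sigq η γ θ - aGKP * r / 2 *
            (γ * (2 * Real.sin θ * Real.cos θ) / (2 * sigq η γ θ))) / sigq η γ θ ^ 2))) θ := by
      have := ((hasDerivAt_gaussTail (uq η γ r θ)).comp θ hq3).const_mul 2
      simpa [Pq, Function.comp, mul_assoc] using this
    have hp4 : HasDerivAt (fun t => Pp η γ r t)
        (2 * (-gaussPdf (up η γ r θ) *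
          ((0 * sigp η γ θ - aGKP / (2 * r) *
            (γ * (2 * Real.cos θ * (-Real.sin θ)) / (2 * sigp η γ θ))) / sigp η γ θ ^ 2))) θ := by
      have := ((hasDerivAt_gaussTail (up η γ r θ)).comp θ hp3).const_mul 2
      simpa [Pp, Function.comp, mul_assoc] using this
    have := hq4.add hp4
    refine this.congr_deriv (Eq.symm ?_)
    unfold balance
    field_simp
    ring
  refine ⟨key, fun θ hθ => ?_⟩
  rw [(key θ).deriv]
  have hsin : 0 < Real.sin θ := Real.sin_pos_of_pos_of_lt_pi hθ.1
    (lt_trans hθ.2 (by linarith [Real.pi_pos]))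
  have hcos : 0 < Real.cos θ := Real.cos_pos_of_mem_Ioo
    ⟨by linarith [hθ.1, Real.pi_pos], hθ.2⟩
  have ha : 0 < aGKP := Real.sqrt_pos.mpr (by positivity)
  have hK : γ * Real.sin θ * Real.cos θ * (aGKP / r) ≠ 0 := by positivity
  constructor
  · intro h
    rcases mul_eq_zero.mp h with h | h
    · exact absurd h hK
    · exact h
  · intro h
    rw [h, mul_zero]
end

section
/- Fix γ ≥ 0 and D ∈ ℕ. The Gaussian dephasing kernel matrix K ∈ Matrix (Fin D) (Fin D) ℝ defined by K m n = e^{−γ (m − n)² / 2} is positive semidefinite, and the Fock-space dephasing map ρ ↦ K ⊙ ρ (entrywise/Hadamard product, i.e. (K ⊙ ρ) m n = e^{−γ(m−n)²/2} · ρ m n) on D×D complex matrices maps positive semidefinite matrices to positive semidefinite matrices and preserves the trace. -/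
open scoped ComplexOrder

private noncomputable def dkC (γ : ℝ) (k : ℕ) : ℝ := γ ^ k / k.factorial

private noncomputable def dkG (γ : ℝ) (k : ℕ) (a : ℝ) : ℝ :=
  Real.exp (-γ * a ^ 2 / 2) * a ^ k

private lemma dkTerm (γ a b : ℝ) (k : ℕ) :
    dkC γ k * dkG γ k a * dkG γ k b =
      (Real.exp (-γ * a ^ 2 / 2) * Real.exp (-γ * b ^ 2 / 2)) *
        ((γ * a * b) ^ k / k.factorial) := by
  simp only [dkC, dkG, mul_pow]
  ring

private lemma dkSummable (γ a b : ℝ) :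
    Summable (fun k : ℕ => dkC γ k * dkG γ k a * dkG γ k b) := by
  refine ((Real.summable_pow_div_factorial (γ * a * b)).mul_left
    (Real.exp (-γ * a ^ 2 / 2) * Real.exp (-γ * b ^ 2 / 2))).congr fun k => ?_
  rw [dkTerm]

private lemma dkKer (γ a b : ℝ) :
    ∑' k : ℕ, dkC γ k * dkG γ k a * dkG γ k b = Real.exp (-γ * (a - b) ^ 2 / 2) := by
  rw [tsum_congr (dkTerm γ a b), tsum_mul_left]
  have hexp : ∑' k : ℕ, (γ * a * b) ^ k / (k.factorial : ℝ) = Real.exp (γ * a * b) := by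
    rw [Real.exp_eq_exp_ℝ, NormedSpace.exp_eq_tsum_div]
  rw [hexp, ← Real.exp_add, ← Real.exp_add]
  congr 1
  ring

private lemma dkKerPSD (γ : ℝ) (hγ : 0 ≤ γ) (D : ℕ) :
    (Matrix.of fun m n : Fin D => Real.exp (-γ * ((m : ℝ) - (n : ℝ)) ^ 2 / 2)).PosSemidef := by
  rw [Matrix.posSemidef_iff_dotProduct_mulVec]
  constructor
  · ext m n
    simp only [Matrix.conjTranspose_apply, Matrix.of_apply, star_trivial]
    congr 2
    ring
  · intro x
    simp only [star_trivial, dotProduct, Matrix.mulVec, Matrix.of_apply,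
      dotProduct]
    have key : ∀ m n : Fin D,
        x m * (Real.exp (-γ * ((m : ℝ) - (n : ℝ)) ^ 2 / 2) * x n) =
          ∑' k : ℕ, x m * (dkC γ k * dkG γ k m * dkG γ k n) * x n := by
      intro m n
      rw [← dkKer γ m n, ← tsum_mul_right, ← tsum_mul_left]
      exact tsum_congr fun k => by ring
    calc ∑ m : Fin D, x m * ∑ n : Fin D, Real.exp (-γ * ((m : ℝ) - (n : ℝ)) ^ 2 / 2) * x n
        = ∑ m : Fin D, ∑ n : Fin D,
            ∑' k : ℕ, x m * (dkC γ k * dkG γ k m * dkG γ k n) * x n := by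
          simp_rw [Finset.mul_sum]; exact Finset.sum_congr rfl fun m _ =>
            Finset.sum_congr rfl fun n _ => key m n
      _ = ∑' k : ℕ, ∑ m : Fin D, ∑ n : Fin D,
            x m * (dkC γ k * dkG γ k m * dkG γ k n) * x n := by
          rw [Summable.tsum_finsetSum]
          · exact Finset.sum_congr rfl fun m _ => (Summable.tsum_finsetSum fun (n : Fin D) _ =>
              ((dkSummable γ m n).mul_left (x m)).mul_right (x n)).symm
          · intro m _
            exact summable_sum fun (n : Fin D) _ =>
              ((dkSummable γ m n).mul_left (x m)).mul_right (x n)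
      _ ≥ 0 := by
          refine tsum_nonneg fun k => ?_
          have : ∑ m : Fin D, ∑ n : Fin D, x m * (dkC γ k * dkG γ k m * dkG γ k n) * x n =
              dkC γ k * (∑ m : Fin D, x m * dkG γ k m) ^ 2 := by
            rw [sq, Finset.sum_mul_sum, Finset.mul_sum]
            exact Finset.sum_congr rfl fun m _ => by
              rw [Finset.mul_sum]; exact Finset.sum_congr rfl fun n _ => by ring
          rw [this]
          exact mul_nonneg (div_nonneg (pow_nonneg hγ _) (Nat.cast_nonneg _)) (sq_nonneg _)

private lemma dkHadamardPSD (γ : ℝ) (hγ : 0 ≤ γ) (D : ℕ) (ρ : Matrix (Fin D) (Fin D) ℂ)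
    (hρ : ρ.PosSemidef) :
    (Matrix.of fun m n : Fin D =>
      ((Real.exp (-γ * ((m : ℝ) - (n : ℝ)) ^ 2 / 2) : ℝ) : ℂ) * ρ m n).PosSemidef := by
  rw [Matrix.posSemidef_iff_dotProduct_mulVec]
  constructor
  · ext m n
    simp only [Matrix.conjTranspose_apply, Matrix.of_apply, star_mul', RCLike.star_def,
      Complex.conj_ofReal]
    have h1 : (starRingEnd ℂ) (ρ n m) = ρ m n := congrFun (congrFun hρ.1 m) n
    have h2 : Real.exp (-γ * ((n : ℝ) - (m : ℝ)) ^ 2 / 2) =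
        Real.exp (-γ * ((m : ℝ) - (n : ℝ)) ^ 2 / 2) := by congr 1; ring
    rw [h1, h2, mul_comm]
  · intro x
    simp only [dotProduct, Matrix.mulVec, Matrix.of_apply, Pi.star_apply,
      RCLike.star_def]
    have key : ∀ m n : Fin D,
        (starRingEnd ℂ) (x m) *
            (((Real.exp (-γ * ((m : ℝ) - (n : ℝ)) ^ 2 / 2) : ℝ) : ℂ) * ρ m n * x n) =
          ∑' k : ℕ, ((dkC γ k * dkG γ k m * dkG γ k n : ℝ) : ℂ) *
            ((starRingEnd ℂ) (x m) * (ρ m n * x n)) := by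
      intro m n
      calc (starRingEnd ℂ) (x m) *
              (((Real.exp (-γ * ((m : ℝ) - (n : ℝ)) ^ 2 / 2) : ℝ) : ℂ) * ρ m n * x n)
          = ((Real.exp (-γ * ((m : ℝ) - (n : ℝ)) ^ 2 / 2) : ℝ) : ℂ) *
              ((starRingEnd ℂ) (x m) * (ρ m n * x n)) := by ring
        _ = _ := by rw [← dkKer γ m n, Complex.ofReal_tsum, ← tsum_mul_right]
    have hsum : ∀ m n : Fin D, Summable fun k : ℕ =>
        ((dkC γ k * dkG γ k (m : ℝ) * dkG γ k (n : ℝ) : ℝ) : ℂ) *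
          ((starRingEnd ℂ) (x m) * (ρ m n * x n)) :=
      fun m n => (Complex.summable_ofReal.mpr (dkSummable γ m n)).mul_right _
    calc ∑ m : Fin D, (starRingEnd ℂ) (x m) *
            ∑ n : Fin D, ((Real.exp (-γ * ((m : ℝ) - (n : ℝ)) ^ 2 / 2) : ℝ) : ℂ) * ρ m n * x n
        = ∑ m : Fin D, ∑ n : Fin D, ∑' k : ℕ,
            ((dkC γ k * dkG γ k m * dkG γ k n : ℝ) : ℂ) *
              ((starRingEnd ℂ) (x m) * (ρ m n * x n)) := by
          simp_rw [Finset.mul_sum]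
          exact Finset.sum_congr rfl fun m _ => Finset.sum_congr rfl fun n _ => key m n
      _ = ∑' k : ℕ, ∑ m : Fin D, ∑ n : Fin D,
            ((dkC γ k * dkG γ k m * dkG γ k n : ℝ) : ℂ) *
              ((starRingEnd ℂ) (x m) * (ρ m n * x n)) := by
          rw [Summable.tsum_finsetSum fun m _ => summable_sum fun (n : Fin D) _ => hsum m n]
          exact Finset.sum_congr rfl fun m _ =>
            (Summable.tsum_finsetSum fun (n : Fin D) _ => hsum m n).symm
      _ ≥ 0 := by
          refine tsum_nonneg fun k => ?_
          set y : Fin D → ℂ := fun n => ((dkG γ k n : ℝ) : ℂ) * x n with hy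
          have hq : ∑ m : Fin D, ∑ n : Fin D,
              ((dkC γ k * dkG γ k m * dkG γ k n : ℝ) : ℂ) *
                ((starRingEnd ℂ) (x m) * (ρ m n * x n)) =
              ((dkC γ k : ℝ) : ℂ) * (dotProduct (star y) (ρ.mulVec y)) := by
            simp only [dotProduct, Matrix.mulVec, Pi.star_apply, hy, star_mul',
              RCLike.star_def, Complex.conj_ofReal, Finset.mul_sum]
            exact Finset.sum_congr rfl fun m _ =>
              Finset.sum_congr rfl fun n _ => by push_cast; ring
          rw [hq]
          have hc : (0 : ℂ) ≤ ((dkC γ k : ℝ) : ℂ) := by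
            rw [Complex.zero_le_real]
            exact div_nonneg (pow_nonneg hγ _) (Nat.cast_nonneg _)
          exact mul_nonneg hc (hρ.dotProduct_mulVec_nonneg y)

/-- for `γ ≥ 0` and Fock cutoff `D`, the Gaussian dephasing kernel
`K m n = e^{-γ(m-n)²/2}` is positive semidefinite, and the entrywise (Hadamard)
dephasing map `ρ ↦ K ⊙ ρ` sends positive semidefinite matrices to positive
semidefinite matrices and preserves the trace. -/
theorem dephasing_kernel_psd_and_channel (γ : ℝ) (hγ : 0 ≤ γ) (D : ℕ) :
    let K : Matrix (Fin D) (Fin D) ℝ :=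
      Matrix.of fun m n => Real.exp (-γ * ((m : ℝ) - (n : ℝ)) ^ 2 / 2)
    K.PosSemidef ∧
    ∀ ρ : Matrix (Fin D) (Fin D) ℂ, ρ.PosSemidef →
      (Matrix.of fun m n => (K m n : ℂ) * ρ m n : Matrix (Fin D) (Fin D) ℂ).PosSemidef ∧
      (Matrix.of fun m n => (K m n : ℂ) * ρ m n : Matrix (Fin D) (Fin D) ℂ).trace =
        ρ.trace := by
  intro K
  refine ⟨dkKerPSD γ hγ D, fun ρ hρ => ⟨dkHadamardPSD γ hγ D ρ hρ, ?_⟩⟩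
  simp only [Matrix.trace, Matrix.diag, Matrix.of_apply, K, sub_self]
  exact Finset.sum_congr rfl fun m _ => by
    norm_num
end
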